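/- Let X, Y be elements of a noncommutative unital ring. Then for every natural number n, (X+Y)^n can be written as a sum, with nonnegative integer coefficients, of terms of the form (\prod_{i=1}^{\ell} ad_X^{r_i}(Y)) X^m, where the sum ranges over \ell \geq 0, nonnegative integers r_1, ..., r_{\ell}, m satisfying r_1 + ... + r_{\ell} + \ell + m = n, and ad_X^r(Y) denotes the r-fold iterated commutator of Y with X. -/

import Mathlib

private theorem pow_mul_eq_sum_ad {R : Type*} [Ring R] (X Y : R) (m : ℕ) :
    X ^ m * Y = ∑ s ∈ Finset.range (m+1),
      m.choose s • ((fun Z => X * Z - Z * X)^[s] Y * X ^ (m - s)) := by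
  induction m with
  | zero => simp
  | succ m ih =>
      have h1 : X ^ (m+1) * Y = X * (X ^ m * Y) := by
        rw [pow_succ', mul_assoc]
      rw [h1, ih, Finset.mul_sum]
      simp only [mul_smul_comm]
      have h3 : ∀ s ∈ Finset.range (m+1),
          X * ((fun Z => X * Z - Z * X)^[s] Y * X ^ (m - s)) =
          (fun Z => X * Z - Z * X)^[s+1] Y * X ^ (m + 1 - (s+1))
          + (fun Z => X * Z - Z * X)^[s] Y * X ^ (m + 1 - s) := by
        intro s hs
        rw [Finset.mem_range] at hs
        set a := (fun Z => X * Z - Z * X)^[s] Y with ha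
        have hstep : (fun Z => X * Z - Z * X)^[s+1] Y = X * a - a * X := by
          rw [Function.iterate_succ_apply']
        rw [hstep]
        have e1 : m + 1 - (s + 1) = m - s := by omega
        rw [e1, sub_mul, mul_assoc a X (X ^ (m - s)), ← pow_succ',
          ← mul_assoc X a (X ^ (m - s))]
        rw [show m - s + 1 = m + 1 - s by omega]
        abel
      rw [Finset.sum_congr rfl (fun s hs => by rw [h3 s hs])]
      simp only [smul_add]
      rw [Finset.sum_add_distrib]
      set g : ℕ → R := fun s => (fun Z => X * Z - Z * X)^[s] Y * X ^ (m + 1 - s) with hg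
      show (∑ s ∈ Finset.range (m+1), m.choose s • g (s+1))
          + (∑ s ∈ Finset.range (m+1), m.choose s • g s)
          = ∑ s ∈ Finset.range (m+2), (m+1).choose s • g s
      rw [Finset.sum_range_succ' (fun s => (m+1).choose s • g s) (m+1)]
      simp only [Nat.choose_succ_succ, add_smul]
      rw [Finset.sum_add_distrib]
      rw [Finset.sum_range_succ (fun s => m.choose (s+1) • g (s+1)) m,
        Nat.choose_succ_self, zero_smul, add_zero]
      rw [Finset.sum_range_succ' (fun s => m.choose s • g s) m]
      simp only [Nat.choose_zero_right, one_smul]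
      abel

private def goodRep {R : Type*} [Ring R] (X Y : R) (n : ℕ) (x : R) : Prop :=
  ∃ (N : ℕ) (c : Fin N → ℕ) (L : Fin N → List ℕ) (m : Fin N → ℕ),
    (∀ i, (L i).sum + (L i).length + m i = n) ∧
    x = ∑ i, (c i : R) *
      (((L i).map (fun r => (fun Z => X * Z - Z * X)^[r] Y)).prod * X ^ (m i))

private theorem goodRep_zero {R : Type*} [Ring R] (X Y : R) (n : ℕ) :
    goodRep X Y n 0 :=
  ⟨0, fun i => 0, fun i => [], fun i => 0, fun i => i.elim0, by simp⟩

private theorem goodRep_add {R : Type*} [Ring R] {X Y : R} {n : ℕ} {x y : R}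
    (hx : goodRep X Y n x) (hy : goodRep X Y n y) : goodRep X Y n (x + y) := by
  obtain ⟨N1, c1, L1, m1, h1, e1⟩ := hx
  obtain ⟨N2, c2, L2, m2, h2, e2⟩ := hy
  refine ⟨N1 + N2, Fin.append c1 c2, Fin.append L1 L2, Fin.append m1 m2, ?_, ?_⟩
  · intro i
    induction i using Fin.addCases with
    | left i => simp only [Fin.append_left]; exact h1 i
    | right i => simp only [Fin.append_right]; exact h2 i
  · rw [e1, e2, Fin.sum_univ_add]
    congr 1
    · exact Finset.sum_congr rfl fun i _ => by simp [Fin.append_left]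
    · exact Finset.sum_congr rfl fun i _ => by simp [Fin.append_right]

private theorem goodRep_single {R : Type*} [Ring R] (X Y : R) {n : ℕ}
    (L : List ℕ) (m : ℕ) (h : L.sum + L.length + m = n) :
    goodRep X Y n ((L.map (fun r => (fun Z => X * Z - Z * X)^[r] Y)).prod * X ^ m) :=
  ⟨1, fun _ => 1, fun _ => L, fun _ => m, fun _ => h, by simp⟩

private theorem goodRep_nsmul {R : Type*} [Ring R] {X Y : R} {n : ℕ} {x : R}
    (k : ℕ) (hx : goodRep X Y n x) : goodRep X Y n (k • x) := by
  obtain ⟨N, c, L, m, h, e⟩ := hx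
  refine ⟨N, fun i => k * c i, L, m, h, ?_⟩
  rw [e, Finset.smul_sum]
  exact Finset.sum_congr rfl fun i _ => by
    rw [nsmul_eq_mul, Nat.cast_mul, mul_assoc]

private theorem goodRep_sum {R : Type*} [Ring R] {X Y : R} {n : ℕ} {ι : Type*}
    (s : Finset ι) (f : ι → R) (h : ∀ i ∈ s, goodRep X Y n (f i)) :
    goodRep X Y n (∑ i ∈ s, f i) := by
  classical
  induction s using Finset.induction_on with
  | empty => simpa using goodRep_zero X Y n
  | insert _ _ hni ih =>
      rw [Finset.sum_insert hni]
      exact goodRep_add (h _ (Finset.mem_insert_self _ _))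
        (ih fun i hi => h i (Finset.mem_insert_of_mem hi))

private theorem goodRep_mul_XY {R : Type*} [Ring R] {X Y : R} {n : ℕ} {x : R}
    (hx : goodRep X Y n x) : goodRep X Y (n + 1) (x * (X + Y)) := by
  obtain ⟨N, c, L, m, h, e⟩ := hx
  rw [e, Finset.sum_mul]
  apply goodRep_sum
  intro i _
  rw [mul_assoc]
  rw [show ((c i : R) * _ : R) = (c i : ℕ) • _ from (nsmul_eq_mul _ _).symm]
  apply goodRep_nsmul
  set P := ((L i).map (fun r => (fun Z => X * Z - Z * X)^[r] Y)).prod with hP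
  have expand : P * X ^ m i * (X + Y)
      = P * X ^ (m i + 1) + ∑ s ∈ Finset.range (m i + 1),
          (m i).choose s • (P * ((fun Z => X * Z - Z * X)^[s] Y * X ^ (m i - s))) := by
    rw [mul_add, mul_assoc P (X ^ m i) Y, pow_mul_eq_sum_ad X Y (m i),
      Finset.mul_sum, mul_assoc P (X ^ m i) X, ← pow_succ]
    simp only [mul_smul_comm]
  rw [expand]
  apply goodRep_add
  · exact goodRep_single X Y (L i) (m i + 1) (by have := h i; omega)
  · apply goodRep_sum
    intro s hs
    rw [Finset.mem_range] at hs
    apply goodRep_nsmul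
    have : P * ((fun Z => X * Z - Z * X)^[s] Y * X ^ (m i - s))
        = (((L i ++ [s]).map (fun r => (fun Z => X * Z - Z * X)^[r] Y)).prod) * X ^ (m i - s) := by
      rw [List.map_append, List.prod_append]
      simp [hP, mul_assoc]
    rw [this]
    exact goodRep_single X Y (L i ++ [s]) (m i - s) (by simp; have := h i; omega)

/-- Expansion of `(X+Y)^n` in a noncommutative ring as a nonnegative-integer combination of
terms `(∏_i ad_X^{r_i}(Y)) X^m` with `r_1 + ⋯ + r_ℓ + ℓ + m = n`. -/
theorem power_of_sum_commutator_expansion {R : Type*} [Ring R] (X Y : R) (n : ℕ) :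
    ∃ (N : ℕ) (c : Fin N → ℕ) (L : Fin N → List ℕ) (m : Fin N → ℕ),
      (∀ i, (L i).sum + (L i).length + m i = n) ∧
      (X + Y) ^ n =
        ∑ i, (c i : R) *
          (((L i).map (fun r => (fun Z => X * Z - Z * X)^[r] Y)).prod * X ^ (m i)) := by
  have : goodRep X Y n ((X + Y) ^ n) := by
    induction n with
    | zero =>
        refine ⟨1, fun _ => 1, fun _ => [], fun _ => 0, fun _ => rfl, by simp⟩
    | succ n ih =>
        rw [pow_succ]
        exact goodRep_mul_XY ih
  exact this
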